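/- Suppose α₁ ≥ α₂. Then there exists y₀ ∈ ℕ such that for every n ≥ 0, almost surely on the event {ζ₁(n) ≥ 1 and ζ₂(n) ≥ y₀}: E[U_{n+1}² | 𝓕_n] ≥ U_n²·(1 + 2(α₁ + rβ₂)/R_n). -/

import Mathlib

open MeasureTheory Filter

set_option maxHeartbeats 1000000 in
/-- Growth of the conditional second moment of `Uₙ`. For the
discrete-time competition process with linear interaction, if `α₁ ≥ α₂` then there exists
`y₀ ∈ ℕ` such that for every `n`, almost surely on the event `{ζ₁(n) ≥ 1 and ζ₂(n) ≥ y₀}`,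
`E[U_{n+1}² | ℱ n] ≥ Uₙ²·(1 + 2(α₁ + rβ₂)/Rₙ)`, where `U(x,y) = x − ry − d`. -/
theorem stmt_10
    {Ω : Type*} {m0 : MeasurableSpace Ω} (P : Measure Ω) [IsProbabilityMeasure P]
    (ℱ : Filtration ℕ m0)
    (l₁ l₂ β₁ β₂ α₁ α₂ : ℝ)
    (hl₁ : 0 < l₁) (hl₂ : 0 < l₂) (hβ₁ : 0 < β₁) (hβ₂ : 0 < β₂)
    (hα₁ : 0 ≤ α₁) (hα₂ : 0 ≤ α₂)
    (ζ₁ ζ₂ : ℕ → Ω → ℕ)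
    (hζ₁meas : ∀ n, Measurable[ℱ n] (ζ₁ n)) (hζ₂meas : ∀ n, Measurable[ℱ n] (ζ₂ n))
    (x₀ y₀ : ℕ) (hinit : ∀ ω, ζ₁ 0 ω = x₀ ∧ ζ₂ 0 ω = y₀)
    (hstep : ∀ n, ∀ᵐ ω ∂P,
      (ζ₁ (n + 1) ω = ζ₁ n ω + 1 ∧ ζ₂ (n + 1) ω = ζ₂ n ω) ∨
      (ζ₁ (n + 1) ω = ζ₁ n ω ∧ ζ₂ (n + 1) ω = ζ₂ n ω + 1) ∨
      (ζ₁ (n + 1) ω + 1 = ζ₁ n ω ∧ ζ₂ (n + 1) ω = ζ₂ n ω) ∨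
      (ζ₁ (n + 1) ω = ζ₁ n ω ∧ ζ₂ (n + 1) ω + 1 = ζ₂ n ω))
    (W : ℕ → Ω → ℝ)
    (hW : ∀ n ω, W n ω =
      (l₁ + α₁ * (ζ₁ n ω : ℝ)) + (l₂ + α₂ * (ζ₂ n ω : ℝ)) +
      (if 1 ≤ ζ₁ n ω then β₁ * (ζ₂ n ω : ℝ) else 0) +
      (if 1 ≤ ζ₂ n ω then β₂ * (ζ₁ n ω : ℝ) else 0))
    (hright : ∀ n,
      P[({ω' | ζ₁ (n + 1) ω' = ζ₁ n ω' + 1 ∧ ζ₂ (n + 1) ω' = ζ₂ n ω'} : Set Ω).indicator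
          (fun _ => (1 : ℝ)) | ℱ n]
        =ᵐ[P] fun ω => (l₁ + α₁ * (ζ₁ n ω : ℝ)) / W n ω)
    (hupp : ∀ n,
      P[({ω' | ζ₁ (n + 1) ω' = ζ₁ n ω' ∧ ζ₂ (n + 1) ω' = ζ₂ n ω' + 1} : Set Ω).indicator
          (fun _ => (1 : ℝ)) | ℱ n]
        =ᵐ[P] fun ω => (l₂ + α₂ * (ζ₂ n ω : ℝ)) / W n ω)
    (hleft : ∀ n,
      P[({ω' | ζ₁ (n + 1) ω' + 1 = ζ₁ n ω' ∧ ζ₂ (n + 1) ω' = ζ₂ n ω'} : Set Ω).indicator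
          (fun _ => (1 : ℝ)) | ℱ n]
        =ᵐ[P] fun ω => (if 1 ≤ ζ₁ n ω then β₁ * (ζ₂ n ω : ℝ) else 0) / W n ω)
    (hdownp : ∀ n,
      P[({ω' | ζ₁ (n + 1) ω' = ζ₁ n ω' ∧ ζ₂ (n + 1) ω' + 1 = ζ₂ n ω'} : Set Ω).indicator
          (fun _ => (1 : ℝ)) | ℱ n]
        =ᵐ[P] fun ω => (if 1 ≤ ζ₂ n ω then β₂ * (ζ₁ n ω : ℝ) else 0) / W n ω)
    (ha12 : α₂ ≤ α₁)
    (r : ℝ) (hr : r = (-(α₁ - α₂) + Real.sqrt ((α₁ - α₂) ^ 2 + 4 * β₁ * β₂)) / (2 * β₂))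
    (d : ℝ) (hd : d = -(2 * (l₁ - r * l₂) + α₁ + β₂ * r ^ 2) / (2 * (α₁ + r * β₂)))
    (R : ℕ → Ω → ℝ)
    (hR : ∀ n ω, R n ω = (α₁ + β₂) * (ζ₁ n ω : ℝ) + (α₂ + β₁) * (ζ₂ n ω : ℝ) + l₁ + l₂)
    (U : ℕ → Ω → ℝ)
    (hU : ∀ n ω, U n ω = (ζ₁ n ω : ℝ) - r * (ζ₂ n ω : ℝ) - d) :
    ∃ y₀ : ℕ, ∀ n, ∀ᵐ ω ∂P, 1 ≤ ζ₁ n ω → y₀ ≤ ζ₂ n ω →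
      U n ω ^ 2 * (1 + 2 * (α₁ + r * β₂) / R n ω) ≤
        (P[(fun ω' => U (n + 1) ω' ^ 2) | ℱ n]) ω := by
  -- basic facts about r and d
  have hs0 : (0:ℝ) ≤ (α₁ - α₂) ^ 2 + 4 * β₁ * β₂ := by positivity
  have hs : Real.sqrt ((α₁ - α₂) ^ 2 + 4 * β₁ * β₂) ^ 2 = (α₁ - α₂) ^ 2 + 4 * β₁ * β₂ :=
    Real.sq_sqrt hs0
  have hsnn : 0 ≤ Real.sqrt ((α₁ - α₂) ^ 2 + 4 * β₁ * β₂) := Real.sqrt_nonneg _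
  have hnum : 0 < -(α₁ - α₂) + Real.sqrt ((α₁ - α₂) ^ 2 + 4 * β₁ * β₂) := by
    nlinarith [sq_nonneg (Real.sqrt ((α₁ - α₂) ^ 2 + 4 * β₁ * β₂) + (α₁ - α₂))]
  have hrpos : 0 < r := by rw [hr]; positivity
  have hH1 : β₂ * r ^ 2 + (α₁ - α₂) * r - β₁ = 0 := by
    rw [hr]; generalize Real.sqrt ((α₁ - α₂) ^ 2 + 4 * β₁ * β₂) = S at hs ⊢; field_simp; nlinarith [hs]
  have hapos : 0 < α₁ + r * β₂ := by nlinarith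
  have hd' : 2 * (α₁ + r * β₂) * d + (2 * (l₁ - r * l₂) + α₁ + β₂ * r ^ 2) = 0 := by
    rw [hd]; field_simp; ring
  -- the constant k and threshold y₁
  set c : ℝ := α₁ + β₂ * r ^ 2 with hc
  set k : ℝ := β₁ + r ^ 2 * α₂ + c * r with hk
  have hcpos : 0 < c := by positivity
  have hkpos : 0 < k := by positivity
  set q : ℝ := -(l₁ + r ^ 2 * l₂ + c * d) with hq
  refine ⟨⌈q / k⌉₊ + 1, fun n => ?_⟩
  -- a.e. boundedness of the process
  have hbnd : ∀ m, ∀ᵐ ω ∂P, ζ₁ m ω ≤ x₀ + m ∧ ζ₂ m ω ≤ y₀ + m := by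
    intro m
    induction m with
    | zero => filter_upwards with ω; simp [(hinit ω).1, (hinit ω).2]
    | succ j ih =>
      filter_upwards [ih, hstep j] with ω h1 h2
      rcases h2 with ⟨e1, e2⟩ | ⟨e1, e2⟩ | ⟨e1, e2⟩ | ⟨e1, e2⟩ <;> omega
  -- measurability of U m
  have hUmeas : ∀ m, Measurable[ℱ m] (U m) := by
    intro m
    have : U m = fun ω => ((ζ₁ m ω : ℝ) - r * (ζ₂ m ω : ℝ) - d) := funext (hU m)
    rw [this]
    exact ((measurable_from_top.comp (hζ₁meas m)).sub
      ((measurable_from_top.comp (hζ₂meas m)).const_mul r)).sub measurable_const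
  have int_of_bdd : ∀ (g : Ω → ℝ) (C : ℝ), AEStronglyMeasurable g P →
      (∀ᵐ ω ∂P, |g ω| ≤ C) → Integrable g P := by
    intro g C hm hb
    exact Integrable.mono' (integrable_const C) hm (by simpa [Real.norm_eq_abs] using hb)
  -- bound for U n
  set C : ℝ := (x₀ + n : ℝ) + r * (y₀ + n : ℝ) + |d| + r + 1 with hC
  have hUbd : ∀ᵐ ω ∂P, |U n ω| ≤ C := by
    filter_upwards [hbnd n] with ω hω
    rw [hU]
    have h1 : (ζ₁ n ω : ℝ) ≤ (x₀ + n : ℝ) := by exact_mod_cast Nat.cast_le.mpr hω.1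
    have h2 : (ζ₂ n ω : ℝ) ≤ (y₀ + n : ℝ) := by exact_mod_cast Nat.cast_le.mpr hω.2
    have h3 : (0:ℝ) ≤ (ζ₁ n ω : ℝ) := Nat.cast_nonneg _
    have h4 : (0:ℝ) ≤ (ζ₂ n ω : ℝ) := Nat.cast_nonneg _
    rw [abs_le]
    constructor
    · nlinarith [neg_abs_le d, le_abs_self d]
    · nlinarith [neg_abs_le d, le_abs_self d]
  -- the four events and their indicators
  set A : Set Ω := {ω' | ζ₁ (n + 1) ω' = ζ₁ n ω' + 1 ∧ ζ₂ (n + 1) ω' = ζ₂ n ω'} with hA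
  set B : Set Ω := {ω' | ζ₁ (n + 1) ω' = ζ₁ n ω' ∧ ζ₂ (n + 1) ω' = ζ₂ n ω' + 1} with hB
  set Cs : Set Ω := {ω' | ζ₁ (n + 1) ω' + 1 = ζ₁ n ω' ∧ ζ₂ (n + 1) ω' = ζ₂ n ω'} with hCs
  set D : Set Ω := {ω' | ζ₁ (n + 1) ω' = ζ₁ n ω' ∧ ζ₂ (n + 1) ω' + 1 = ζ₂ n ω'} with hD
  have hζm : ∀ m, Measurable (ζ₁ m) ∧ Measurable (ζ₂ m) := fun m =>
    ⟨(hζ₁meas m).mono (ℱ.le m) le_rfl, (hζ₂meas m).mono (ℱ.le m) le_rfl⟩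
  have hAmeas : MeasurableSet A :=
    (measurableSet_eq_fun (hζm (n+1)).1 ((hζm n).1.add_const 1)).inter
      (measurableSet_eq_fun (hζm (n+1)).2 (hζm n).2)
  have hBmeas : MeasurableSet B :=
    (measurableSet_eq_fun (hζm (n+1)).1 (hζm n).1).inter
      (measurableSet_eq_fun (hζm (n+1)).2 ((hζm n).2.add_const 1))
  have hCmeas : MeasurableSet Cs :=
    (measurableSet_eq_fun ((hζm (n+1)).1.add_const 1) (hζm n).1).inter
      (measurableSet_eq_fun (hζm (n+1)).2 (hζm n).2)
  have hDmeas : MeasurableSet D :=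
    (measurableSet_eq_fun (hζm (n+1)).1 (hζm n).1).inter
      (measurableSet_eq_fun ((hζm (n+1)).2.add_const 1) (hζm n).2)
  -- indicator functions and f's
  set iA := A.indicator (fun _ => (1:ℝ)) with hiA
  set iB := B.indicator (fun _ => (1:ℝ)) with hiB
  set iC := Cs.indicator (fun _ => (1:ℝ)) with hiC
  set iD := D.indicator (fun _ => (1:ℝ)) with hiD
  set fA : Ω → ℝ := fun ω => (U n ω + 1) ^ 2 with hfA
  set fB : Ω → ℝ := fun ω => (U n ω - r) ^ 2 with hfB
  set fC : Ω → ℝ := fun ω => (U n ω - 1) ^ 2 with hfC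
  set fD : Ω → ℝ := fun ω => (U n ω + r) ^ 2 with hfD
  have hiA_int : Integrable iA P := (integrable_const 1).indicator hAmeas
  have hiB_int : Integrable iB P := (integrable_const 1).indicator hBmeas
  have hiC_int : Integrable iC P := (integrable_const 1).indicator hCmeas
  have hiD_int : Integrable iD P := (integrable_const 1).indicator hDmeas
  have hfmeas : ∀ (δ : ℝ), StronglyMeasurable[ℱ n] (fun ω => (U n ω + δ) ^ 2) :=
    fun δ => (((hUmeas n).add_const δ).pow_const 2).stronglyMeasurable
  have hind_bd : ∀ (S : Set Ω) (ω : Ω), |S.indicator (fun _ => (1:ℝ)) ω| ≤ 1 := by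
    intro S ω
    by_cases h : ω ∈ S <;> simp [Set.indicator_apply, h]
  have hfi_int : ∀ (δ : ℝ) (S : Set Ω), MeasurableSet S → |δ| ≤ r + 1 →
      Integrable ((fun ω => (U n ω + δ) ^ 2) * S.indicator (fun _ => (1:ℝ))) P := by
    intro δ S hS hδ
    apply int_of_bdd _ ((C + r + 1) ^ 2)
    · exact (((hfmeas δ).mono (ℱ.le n)).aestronglyMeasurable.mul
        ((stronglyMeasurable_const.indicator hS).aestronglyMeasurable))
    · filter_upwards [hUbd] with ω hω
      have h1 := hind_bd S ω
      have h2 : |U n ω + δ| ≤ C + r + 1 := by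
        calc |U n ω + δ| ≤ |U n ω| + |δ| := abs_add_le _ _
        _ ≤ C + (r + 1) := add_le_add hω hδ
        _ = C + r + 1 := by ring
      have hCpos : (0:ℝ) ≤ C + r + 1 := le_trans (abs_nonneg _) h2
      calc |((fun ω => (U n ω + δ) ^ 2) * S.indicator (fun _ => (1:ℝ))) ω|
          = |(U n ω + δ) ^ 2| * |S.indicator (fun _ => (1:ℝ)) ω| := abs_mul _ _
        _ ≤ (C + r + 1) ^ 2 * 1 := by
            apply mul_le_mul _ h1 (abs_nonneg _) (by positivity)
            rw [abs_pow]
            exact pow_le_pow_left₀ (abs_nonneg _) h2 2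
        _ = (C + r + 1) ^ 2 := mul_one _
  have hrr1 : |(1:ℝ)| ≤ r + 1 := by rw [abs_one]; linarith
  have hrrm1 : |(-1:ℝ)| ≤ r + 1 := by rw [abs_neg, abs_one]; linarith
  have hrrr : |r| ≤ r + 1 := by rw [abs_of_pos hrpos]; linarith
  have hrrmr : |(-r)| ≤ r + 1 := by rw [abs_neg, abs_of_pos hrpos]; linarith
  have hintA := hfi_int 1 A hAmeas hrr1
  have hintB : Integrable ((fun ω => (U n ω - r) ^ 2) * iB) P := by
    have := hfi_int (-r) B hBmeas hrrmr
    simpa [sub_eq_add_neg] using this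
  have hintC : Integrable ((fun ω => (U n ω - 1) ^ 2) * iC) P := by
    have := hfi_int (-1) Cs hCmeas hrrm1
    simpa [sub_eq_add_neg] using this
  have hintD := hfi_int r D hDmeas hrrr
  -- decomposition of U(n+1)^2
  have hsum : (fun ω' => U (n + 1) ω' ^ 2) =ᵐ[P]
      (fA * iA + fB * iB + fC * iC + fD * iD) := by
    filter_upwards [hstep n] with ω hω
    have hU1 := hU (n + 1) ω
    have hU0 := hU n ω
    rcases hω with ⟨e1, e2⟩ | ⟨e1, e2⟩ | ⟨e1, e2⟩ | ⟨e1, e2⟩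
    · have mA : ω ∈ A := ⟨e1, e2⟩
      have mB : ω ∉ B := by intro h; exact absurd h.1 (by omega)
      have mC : ω ∉ Cs := by intro h; exact absurd h.1 (by omega)
      have mD : ω ∉ D := by intro h; exact absurd h.2 (by omega)
      simp only [Pi.add_apply, Pi.mul_apply, hiA, hiB, hiC, hiD,
        Set.indicator_of_mem mA, Set.indicator_of_notMem mB,
        Set.indicator_of_notMem mC, Set.indicator_of_notMem mD,
        mul_one, mul_zero, add_zero, zero_add, hfA]
      rw [hU1, hU0, e1, e2]
      push_cast
      ring
    · have mA : ω ∉ A := by intro h; exact absurd h.1 (by omega)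
      have mB : ω ∈ B := ⟨e1, e2⟩
      have mC : ω ∉ Cs := by intro h; exact absurd h.2 (by omega)
      have mD : ω ∉ D := by intro h; exact absurd h.2 (by omega)
      simp only [Pi.add_apply, Pi.mul_apply, hiA, hiB, hiC, hiD,
        Set.indicator_of_mem mB, Set.indicator_of_notMem mA,
        Set.indicator_of_notMem mC, Set.indicator_of_notMem mD,
        mul_one, mul_zero, add_zero, zero_add, hfB]
      rw [hU1, hU0, e1, e2]
      push_cast
      ring
    · have mA : ω ∉ A := by intro h; exact absurd h.1 (by omega)
      have mB : ω ∉ B := by intro h; exact absurd h.2 (by omega)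
      have mC : ω ∈ Cs := ⟨e1, e2⟩
      have mD : ω ∉ D := by intro h; exact absurd h.1 (by omega)
      simp only [Pi.add_apply, Pi.mul_apply, hiA, hiB, hiC, hiD,
        Set.indicator_of_mem mC, Set.indicator_of_notMem mA,
        Set.indicator_of_notMem mB, Set.indicator_of_notMem mD,
        mul_one, mul_zero, add_zero, zero_add, hfC]
      rw [hU1, hU0, ← e1, e2]
      push_cast
      ring
    · have mA : ω ∉ A := by intro h; exact absurd h.2 (by omega)
      have mB : ω ∉ B := by intro h; exact absurd h.2 (by omega)
      have mC : ω ∉ Cs := by intro h; exact absurd h.2 (by omega)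
      have mD : ω ∈ D := ⟨e1, e2⟩
      simp only [Pi.add_apply, Pi.mul_apply, hiA, hiB, hiC, hiD,
        Set.indicator_of_mem mD, Set.indicator_of_notMem mA,
        Set.indicator_of_notMem mB, Set.indicator_of_notMem mC,
        mul_one, mul_zero, add_zero, zero_add, hfD]
      rw [hU1, hU0, e1, ← e2]
      push_cast
      ring
  -- conditional expectation computation
  have hce : P[(fun ω' => U (n + 1) ω' ^ 2) | ℱ n] =ᵐ[P]
      (fA * P[iA | ℱ n] + fB * P[iB | ℱ n] + fC * P[iC | ℱ n] + fD * P[iD | ℱ n]) := by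
    refine (condExp_congr_ae hsum).trans ?_
    have h1 : P[(fA * iA + fB * iB + fC * iC + fD * iD) | ℱ n] =ᵐ[P]
        P[fA * iA | ℱ n] + P[fB * iB | ℱ n] + P[fC * iC | ℱ n] + P[fD * iD | ℱ n] := by
      refine (condExp_add ((hintA.add hintB).add hintC) hintD _).trans ?_
      refine EventuallyEq.add ?_ EventuallyEq.rfl
      refine (condExp_add (hintA.add hintB) hintC _).trans ?_
      refine EventuallyEq.add ?_ EventuallyEq.rfl
      exact condExp_add hintA hintB _
    refine h1.trans ?_
    have eA : P[fA * iA | ℱ n] =ᵐ[P] fA * P[iA | ℱ n] :=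
      condExp_mul_of_stronglyMeasurable_left (hfmeas 1) hintA hiA_int
    have eB : P[fB * iB | ℱ n] =ᵐ[P] fB * P[iB | ℱ n] :=
      condExp_mul_of_stronglyMeasurable_left (by simpa [hfB, sub_eq_add_neg] using hfmeas (-r)) hintB hiB_int
    have eC : P[fC * iC | ℱ n] =ᵐ[P] fC * P[iC | ℱ n] :=
      condExp_mul_of_stronglyMeasurable_left (by simpa [hfC, sub_eq_add_neg] using hfmeas (-1)) hintC hiC_int
    have eD : P[fD * iD | ℱ n] =ᵐ[P] fD * P[iD | ℱ n] :=
      condExp_mul_of_stronglyMeasurable_left (hfmeas r) hintD hiD_int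
    exact ((eA.add eB).add eC).add eD
  -- final pointwise argument
  filter_upwards [hce, hright n, hupp n, hleft n, hdownp n] with ω hceω hrω huω hlω hdω h1 h2
  have hy1 : 1 ≤ ζ₂ n ω := by omega
  rw [Pi.add_apply, Pi.add_apply, Pi.add_apply, Pi.mul_apply, Pi.mul_apply,
    Pi.mul_apply, Pi.mul_apply] at hceω
  rw [hceω, hrω, huω, hlω, hdω, if_pos h1, if_pos hy1]
  -- abbreviations
  set x : ℝ := (ζ₁ n ω : ℝ) with hx
  set y : ℝ := (ζ₂ n ω : ℝ) with hy
  have hx1 : (1:ℝ) ≤ x := by rw [hx]; exact_mod_cast h1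
  have hyc : ((⌈q / k⌉₊ + 1 : ℕ) : ℝ) ≤ y := by rw [hy]; exact_mod_cast h2
  have hyq : q / k ≤ y := by
    have h0 : (q / k : ℝ) ≤ (⌈q / k⌉₊ : ℝ) := Nat.le_ceil _
    have h1' : ((⌈q / k⌉₊ : ℕ) : ℝ) ≤ ((⌈q / k⌉₊ + 1 : ℕ) : ℝ) := by push_cast; linarith
    linarith [hyc]
  have hy0 : (0:ℝ) ≤ y := Nat.cast_nonneg _
  have hWv : W n ω = l₁ + α₁ * x + (l₂ + α₂ * y) + β₁ * y + β₂ * x := by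
    rw [hW, if_pos h1, if_pos hy1]
  have hRv : R n ω = l₁ + α₁ * x + (l₂ + α₂ * y) + β₁ * y + β₂ * x := by
    rw [hR]; ring
  have hRpos : 0 < l₁ + α₁ * x + (l₂ + α₂ * y) + β₁ * y + β₂ * x := by nlinarith
  rw [hWv, hRv]
  set Rv : ℝ := l₁ + α₁ * x + (l₂ + α₂ * y) + β₁ * y + β₂ * x with hRvdef
  have hUv : U n ω = x - r * y - d := hU n ω
  have hky : q ≤ k * y := by
    rw [div_le_iff₀ hkpos] at hyq
    linarith [hyq]
  -- key algebraic nonnegativity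
  have hkey : 0 ≤ fA ω * (l₁ + α₁ * x) + fB ω * (l₂ + α₂ * y) + fC ω * (β₁ * y)
      + fD ω * (β₂ * x) - U n ω ^ 2 * Rv - 2 * (α₁ + r * β₂) * U n ω ^ 2 := by
    have hNum : fA ω * (l₁ + α₁ * x) + fB ω * (l₂ + α₂ * y) + fC ω * (β₁ * y)
        + fD ω * (β₂ * x) - U n ω ^ 2 * Rv - 2 * (α₁ + r * β₂) * U n ω ^ 2
        = (l₁ + r ^ 2 * l₂ + c * d) + k * y := by
      simp only [hfA, hfB, hfC, hfD]
      rw [hUv, hRvdef, hk, hc]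
      linear_combination (x - r * y - d) * hd' + (2 * y * (x - r * y - d)) * hH1
    have h5 : (l₁ + r ^ 2 * l₂ + c * d) + k * y = k * y - q := by rw [hq]; ring
    rw [hNum, h5]
    linarith [hky]
  have hdiff : fA ω * ((l₁ + α₁ * x) / Rv) + fB ω * ((l₂ + α₂ * y) / Rv)
      + fC ω * (β₁ * y / Rv) + fD ω * (β₂ * x / Rv)
      - U n ω ^ 2 * (1 + 2 * (α₁ + r * β₂) / Rv)
      = (fA ω * (l₁ + α₁ * x) + fB ω * (l₂ + α₂ * y) + fC ω * (β₁ * y)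
        + fD ω * (β₂ * x) - U n ω ^ 2 * Rv - 2 * (α₁ + r * β₂) * U n ω ^ 2) / Rv := by
    field_simp
    ring
  have : 0 ≤ fA ω * ((l₁ + α₁ * x) / Rv) + fB ω * ((l₂ + α₂ * y) / Rv)
      + fC ω * (β₁ * y / Rv) + fD ω * (β₂ * x / Rv)
      - U n ω ^ 2 * (1 + 2 * (α₁ + r * β₂) / Rv) := by
    rw [hdiff]
    exact div_nonneg hkey hRpos.le
  linarith [this]
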